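/- Let (A,B) be a maximal c/d-cross-intersecting pair (|A|·|B| = 2^n, 0 < c/d < 1 irreducible). Then for any B₁, B₂ ∈ B, we have |B₁ ∩ B₂| ≡ 0 (mod d). -/

import Mathlib

open Finset
open scoped symmDiff

private def phiv {n : ℕ} (s : Finset (Fin n)) : Fin n → ZMod 2 :=
  fun i => if i ∈ s then 1 else 0

private lemma phiv_inj {n : ℕ} : Function.Injective (phiv (n := n)) := by
  intro s t h
  ext i
  have h1 := congrFun h i
  simp only [phiv] at h1
  by_cases hs : i ∈ s <;> by_cases ht : i ∈ t <;> simp_all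

private lemma phiv_symmDiff {n : ℕ} (s t : Finset (Fin n)) :
    phiv (s ∆ t) = phiv s + phiv t := by
  funext i
  simp only [phiv, Pi.add_apply, Finset.mem_symmDiff]
  by_cases hs : i ∈ s <;> by_cases ht : i ∈ t <;> simp [hs, ht] <;> decide

private lemma phiv_dot {n : ℕ} (s t : Finset (Fin n)) :
    ∑ i, phiv s i * phiv t i = ((s ∩ t).card : ZMod 2) := by
  have h : ∀ i : Fin n, phiv s i * phiv t i = if i ∈ s ∩ t then (1 : ZMod 2) else 0 := by
    intro i
    simp only [phiv, Finset.mem_inter]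
    by_cases hs : i ∈ s <;> by_cases ht : i ∈ t <;> simp [hs, ht]
  rw [Finset.sum_congr rfl fun i _ => h i, Finset.sum_boole]
  have hf : (Finset.univ.filter (fun i => i ∈ s ∩ t)) = s ∩ t := by ext x; simp
  rw [hf]

private lemma card_symmDiff_aux {n : ℕ} (s t : Finset (Fin n)) :
    (s ∆ t).card + 2 * (s ∩ t).card = s.card + t.card := by
  classical
  have h1 : (s \ t).card + (s ∩ t).card = s.card := Finset.card_sdiff_add_card_inter s t
  have h2 : (t \ s).card + (t ∩ s).card = t.card := Finset.card_sdiff_add_card_inter t s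
  have h3 : (s ∆ t).card = (s \ t).card + (t \ s).card := by
    rw [symmDiff_def, Finset.sup_eq_union]
    exact Finset.card_union_of_disjoint (disjoint_sdiff_sdiff)
  rw [Finset.inter_comm t s] at h2
  omega

theorem maximal_B_inter_div (n c d : ℕ) (hn : 0 < n) (hc : 0 < c) (hcd : c < d)
    (hcop : Nat.Coprime c d)
    (A B : Finset (Finset (Fin n)))
    (hcross : ∀ a ∈ A, ∀ b ∈ B, d * (a ∩ b).card = c * b.card)
    (hmax : A.card * B.card = 2 ^ n) :
    ∀ b₁ ∈ B, ∀ b₂ ∈ B, d ∣ (b₁ ∩ b₂).card := by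
  classical
  intro b₁ hb₁ b₂ hb₂
  have hd : 0 < d := lt_trans hc hcd
  have h2n : 0 < 2 ^ n := Nat.pow_pos (by norm_num)
  have hApos : 0 < A.card := by
    rcases Nat.eq_zero_or_pos A.card with h | h
    · rw [h, zero_mul] at hmax; omega
    · exact h
  have hBpos : 0 < B.card := by
    rcases Nat.eq_zero_or_pos B.card with h | h
    · rw [h, mul_zero] at hmax; omega
    · exact h
  obtain ⟨a₀, ha₀⟩ := Finset.card_pos.mp hApos
  -- The key closure fact: b₁ ∆ b₂ ∈ B
  have hclosed : b₁ ∆ b₂ ∈ B := by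
    set K := ZMod 2 with hK
    let M : Matrix {x // x ∈ B} (Fin n) K := fun b i => phiv (b : Finset (Fin n)) i
    let L := M.mulVecLin
    let V : Submodule K (Fin n → K) :=
      Submodule.span K (Set.range fun b : {x // x ∈ B} => phiv (b : Finset (Fin n)))
    let W := LinearMap.ker L
    haveI : Fintype ↥V := Fintype.ofFinite _
    haveI : Fintype ↥W := Fintype.ofFinite _
    -- rank–nullity
    have hrank : M.rank = Module.finrank K V := by
      rw [← Matrix.rank_transpose, Matrix.rank_eq_finrank_span_cols]
      rfl
    have hrn : M.rank + Module.finrank K W = n := by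
      have := LinearMap.finrank_range_add_finrank_ker L
      rw [Module.finrank_pi, Fintype.card_fin] at this
      exact this
    -- cardinalities of V and W
    have hcardK : Fintype.card K = 2 := by simp [hK]
    have hcardV : Fintype.card ↥V = 2 ^ Module.finrank K V := by
      have h := Module.card_eq_pow_finrank (K := K) (V := ↥V); rwa [hcardK] at h
    have hcardW : Fintype.card ↥W = 2 ^ Module.finrank K W := by
      have h := Module.card_eq_pow_finrank (K := K) (V := ↥W); rwa [hcardK] at h
    -- B injects into V
    have hmemV : ∀ b : {x // x ∈ B}, phiv (b : Finset (Fin n)) ∈ V :=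
      fun b => Submodule.subset_span ⟨b, rfl⟩
    let fB : {x // x ∈ B} → ↥V := fun b => ⟨phiv (b : Finset (Fin n)), hmemV b⟩
    have hfBinj : Function.Injective fB := by
      intro x y h
      have := phiv_inj (congrArg Subtype.val h)
      exact Subtype.ext this
    have hBle : B.card ≤ Fintype.card ↥V := by
      rw [← Fintype.card_coe]
      exact Fintype.card_le_of_injective fB hfBinj
    -- intersections with members of B have constant size over A
    have hconst : ∀ a ∈ A, ∀ b ∈ B, (a ∩ b).card = (a₀ ∩ b).card := by
      intro a ha b hb
      have h1 := hcross a ha b hb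
      have h2 := hcross a₀ ha₀ b hb
      exact Nat.eq_of_mul_eq_mul_left hd (h1.trans h2.symm)
    -- A injects into W
    have hmemW : ∀ a : {x // x ∈ A}, phiv (a : Finset (Fin n)) + phiv a₀ ∈ W := by
      intro a
      rw [LinearMap.mem_ker]
      funext b
      show (M.mulVec (phiv (a : Finset (Fin n)) + phiv a₀)) b = 0
      simp only [Matrix.mulVec, dotProduct, Pi.add_apply, mul_add, Finset.sum_add_distrib]
      have e1 : ∑ i, M b i * phiv (a : Finset (Fin n)) i
          = (((b : Finset (Fin n)) ∩ (a : Finset (Fin n))).card : K) := phiv_dot _ _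
      have e2 : ∑ i, M b i * phiv a₀ i
          = (((b : Finset (Fin n)) ∩ a₀).card : K) := phiv_dot _ _
      rw [e1, e2]
      rw [Finset.inter_comm _ (a : Finset (Fin n)), Finset.inter_comm _ a₀,
        hconst a a.2 b b.2]
      rw [← two_mul]
      have h20 : (2 : K) = 0 := rfl
      rw [h20, zero_mul]
    let fA : {x // x ∈ A} → ↥W := fun a => ⟨phiv (a : Finset (Fin n)) + phiv a₀, hmemW a⟩
    have hfAinj : Function.Injective fA := by
      intro x y h
      have h1 : phiv (x : Finset (Fin n)) + phiv a₀ = phiv (y : Finset (Fin n)) + phiv a₀ :=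
        congrArg Subtype.val h
      exact Subtype.ext (phiv_inj (add_right_cancel h1))
    have hAle : A.card ≤ Fintype.card ↥W := by
      rw [← Fintype.card_coe]
      exact Fintype.card_le_of_injective fA hfAinj
    -- equality chain
    have hprod : Fintype.card ↥W * Fintype.card ↥V = 2 ^ n := by
      rw [hcardV, hcardW, ← pow_add]
      congr 1
      omega
    have hBeq : B.card = Fintype.card ↥V := by
      have h1 : Fintype.card ↥W * Fintype.card ↥V ≤ Fintype.card ↥W * B.card := by
        calc Fintype.card ↥W * Fintype.card ↥V = A.card * B.card := by rw [hprod, hmax]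
          _ ≤ Fintype.card ↥W * B.card := Nat.mul_le_mul_right _ hAle
      have hWpos : 0 < Fintype.card ↥W := by rw [hcardW]; exact Nat.pow_pos (by norm_num)
      have h2 : Fintype.card ↥V ≤ B.card := Nat.le_of_mul_le_mul_left h1 hWpos
      omega
    -- fB is surjective
    have hfBsurj : Function.Surjective fB := by
      have hcards : Fintype.card {x // x ∈ B} = Fintype.card ↥V := by
        rw [Fintype.card_coe]; exact hBeq
      exact ((Fintype.bijective_iff_injective_and_card fB).mpr ⟨hfBinj, hcards⟩).2
    -- phiv b₁ + phiv b₂ ∈ V, so it is phiv of some element of B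
    have hv : phiv b₁ + phiv b₂ ∈ V := by
      exact Submodule.add_mem V (Submodule.subset_span ⟨⟨b₁, hb₁⟩, rfl⟩)
        (Submodule.subset_span ⟨⟨b₂, hb₂⟩, rfl⟩)
    obtain ⟨b₃, hb₃⟩ := hfBsurj ⟨phiv b₁ + phiv b₂, hv⟩
    have h3 : phiv (b₃ : Finset (Fin n)) = phiv b₁ + phiv b₂ := congrArg Subtype.val hb₃
    have h4 : (b₃ : Finset (Fin n)) = b₁ ∆ b₂ := by
      apply phiv_inj
      rw [h3, phiv_symmDiff]
    rw [← h4]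
    exact b₃.2
  -- final arithmetic
  have e1 := hcross a₀ ha₀ b₁ hb₁
  have e2 := hcross a₀ ha₀ b₂ hb₂
  have e3 := hcross a₀ ha₀ _ hclosed
  have c1 := card_symmDiff_aux b₁ b₂
  have c2 : (a₀ ∩ (b₁ ∆ b₂)).card + 2 * (a₀ ∩ b₁ ∩ b₂).card
      = (a₀ ∩ b₁).card + (a₀ ∩ b₂).card := by
    have hdist : a₀ ∩ (b₁ ∆ b₂) = (a₀ ∩ b₁) ∆ (a₀ ∩ b₂) := by
      simpa [Finset.inf_eq_inter] using inf_symmDiff_distrib_left a₀ b₁ b₂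
    have hint : (a₀ ∩ b₁) ∩ (a₀ ∩ b₂) = a₀ ∩ b₁ ∩ b₂ := by
      ext x; simp [Finset.mem_inter]; tauto
    have := card_symmDiff_aux (a₀ ∩ b₁) (a₀ ∩ b₂)
    rw [hdist, hint] at *
    omega
  set x₁ := (a₀ ∩ b₁).card
  set x₂ := (a₀ ∩ b₂).card
  set x₃ := (a₀ ∩ (b₁ ∆ b₂)).card
  set y := (a₀ ∩ b₁ ∩ b₂).card
  set m₁ := b₁.card
  set m₂ := b₂.card
  set m₃ := (b₁ ∆ b₂).card
  set k := (b₁ ∩ b₂).card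
  have key : d * y = c * k := by
    have hcalc : d * x₃ + 2 * (d * y) = d * x₃ + 2 * (c * k) := by
      calc d * x₃ + 2 * (d * y) = d * (x₃ + 2 * y) := by ring
        _ = d * (x₁ + x₂) := by rw [c2]
        _ = d * x₁ + d * x₂ := by ring
        _ = c * m₁ + c * m₂ := by rw [e1, e2]
        _ = c * (m₁ + m₂) := by ring
        _ = c * (m₃ + 2 * k) := by rw [c1]
        _ = c * m₃ + 2 * (c * k) := by ring
        _ = d * x₃ + 2 * (c * k) := by rw [e3]
    have h5 : 2 * (d * y) = 2 * (c * k) := Nat.add_left_cancel hcalc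
    exact Nat.eq_of_mul_eq_mul_left (by norm_num) h5
  have hdvd : d ∣ c * k := ⟨y, key.symm⟩
  exact (Nat.Coprime.dvd_of_dvd_mul_left hcop.symm hdvd)
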